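/- For every k ≥ 2, the independence polynomial of the k-cycle satisfies P_{C_k}(x) = 2^{1−k} Σ_{j=0}^{⌊k/2⌋} C(k, 2j) (1+4x)^j. -/

import Mathlib

open scoped Classical
open Polynomial

/-- `s` is an independent set of `G`. -/
def IsIndepFinset {V : Type*} (G : SimpleGraph V) (s : Finset V) : Prop :=
  ∀ ⦃v⦄, v ∈ s → ∀ ⦃w⦄, w ∈ s → ¬ G.Adj v w

/-- The independence polynomial of `G` restricted to independent sets contained in `A`
(so `indepPolyOn G Finset.univ` is the independence polynomial of `G`, and taking `A` to be
the set of vertices of maximum degree gives `P_{G*}`). -/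
noncomputable def indepPolyOn {V : Type*} [Fintype V] (G : SimpleGraph V)
    (A : Finset V) : Polynomial ℝ :=
  ∑ s ∈ A.powerset.filter (fun s => IsIndepFinset G s), (X : Polynomial ℝ) ^ s.card

/-- The independence polynomial `P_G(x) = Σ_k i_G(k) x^k`. -/
noncomputable def indepPoly {V : Type*} [Fintype V] (G : SimpleGraph V) : Polynomial ℝ :=
  indepPolyOn G Finset.univ

lemma indepPolyOn_empty {V : Type*} [Fintype V] (G : SimpleGraph V) :
    indepPolyOn G (∅ : Finset V) = 1 := by
  unfold indepPolyOn
  rw [Finset.powerset_empty, Finset.sum_filter, Finset.sum_singleton,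
    if_pos (show IsIndepFinset G ∅ from fun _ h => absurd h (Finset.notMem_empty _))]
  simp

lemma IsIndepFinset.subset {V : Type*} {G : SimpleGraph V} {s t : Finset V}
    (h : IsIndepFinset G t) (hst : s ⊆ t) : IsIndepFinset G s :=
  fun _ ha _ hb => h (hst ha) (hst hb)

lemma indepPolyOn_split {V : Type*} [Fintype V] (G : SimpleGraph V)
    (A A' B : Finset V) (v : V) (hv : v ∈ A)
    (hA' : ∀ w, w ∈ A' ↔ w ∈ A ∧ w ≠ v)
    (hB : ∀ w, w ∈ B ↔ w ∈ A ∧ w ≠ v ∧ ¬ G.Adj v w) :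
    indepPolyOn G A = indepPolyOn G A' + X * indepPolyOn G B := by
  classical
  unfold indepPolyOn
  rw [← Finset.sum_filter_add_sum_filter_not
    (A.powerset.filter (fun s => IsIndepFinset G s)) (fun s => v ∈ s)]
  have h1 : (A.powerset.filter (fun s => IsIndepFinset G s)).filter (fun s => ¬ v ∈ s)
      = A'.powerset.filter (fun s => IsIndepFinset G s) := by
    ext s
    simp only [Finset.mem_filter, Finset.mem_powerset]
    constructor
    · rintro ⟨⟨hsA, hind⟩, hvs⟩
      refine ⟨fun w hw => (hA' w).2 ⟨hsA hw, ?_⟩, hind⟩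
      rintro rfl; exact hvs hw
    · rintro ⟨hsA', hind⟩
      refine ⟨⟨fun w hw => ((hA' w).1 (hsA' hw)).1, hind⟩, fun hvs => ?_⟩
      exact ((hA' v).1 (hsA' hvs)).2 rfl
  have h2 : ∑ s ∈ (A.powerset.filter (fun s => IsIndepFinset G s)).filter (fun s => v ∈ s),
      (X : Polynomial ℝ) ^ s.card
      = X * ∑ t ∈ B.powerset.filter (fun s => IsIndepFinset G s), (X : Polynomial ℝ) ^ t.card := by
    rw [Finset.mul_sum]
    refine Finset.sum_nbij' (fun s => s.erase v) (fun t => insert v t) ?_ ?_ ?_ ?_ ?_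
    · intro s hs
      simp only [Finset.mem_filter, Finset.mem_powerset] at hs ⊢
      obtain ⟨⟨hsA, hind⟩, hvs⟩ := hs
      refine ⟨fun w hw => ?_, hind.subset (Finset.erase_subset _ _)⟩
      rw [Finset.mem_erase] at hw
      exact (hB w).2 ⟨hsA hw.2, hw.1, hind hvs hw.2⟩
    · intro t ht
      simp only [Finset.mem_filter, Finset.mem_powerset] at ht ⊢
      obtain ⟨htB, hind⟩ := ht
      have hvt : v ∉ t := fun h => ((hB v).1 (htB h)).2.1 rfl
      refine ⟨⟨?_, ?_⟩, Finset.mem_insert_self v t⟩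
      · intro w hw
        rcases Finset.mem_insert.1 hw with rfl | hw
        · exact hv
        · exact ((hB w).1 (htB hw)).1
      · intro a ha b hb hadj
        rcases Finset.mem_insert.1 ha with ha | ha <;> rcases Finset.mem_insert.1 hb with hb | hb
        · exact G.loopless.irrefl v (by rwa [ha, hb] at hadj)
        · exact ((hB b).1 (htB hb)).2.2 (by rwa [ha] at hadj)
        · exact ((hB a).1 (htB ha)).2.2 (by rw [hb] at hadj; exact hadj.symm)
        · exact hind ha hb hadj
    · intro s hs
      simp only [Finset.mem_filter] at hs
      exact Finset.insert_erase hs.2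
    · intro t ht
      simp only [Finset.mem_filter, Finset.mem_powerset] at ht
      have hvt : v ∉ t := fun h => ((hB v).1 (ht.1 h)).2.1 rfl
      exact Finset.erase_insert hvt
    · intro s hs
      simp only [Finset.mem_filter] at hs
      obtain ⟨m, hm⟩ : ∃ m, s.card = m + 1 :=
        ⟨s.card - 1, (Nat.succ_pred_eq_of_pos (Finset.card_pos.2 ⟨v, hs.2⟩)).symm⟩
      rw [Finset.card_erase_of_mem hs.2, hm, Nat.add_sub_cancel, pow_succ]
      ring
  rw [h1, h2]
  ring

noncomputable def pfib (x : ℝ) : ℕ → ℝ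
  | 0 => 1
  | 1 => 1 + x
  | (n+2) => pfib x (n+1) + x * pfib x n

lemma pfib_zero (x : ℝ) : pfib x 0 = 1 := rfl
lemma pfib_one (x : ℝ) : pfib x 1 = 1 + x := rfl
lemma pfib_succ_succ (x : ℝ) (n : ℕ) : pfib x (n+2) = pfib x (n+1) + x * pfib x n := rfl

lemma pfib_succ (x : ℝ) (n : ℕ) : pfib x (n+1) = pfib x n + x * pfib x (n-1) := by
  cases n with
  | zero => show (1 : ℝ) + x = 1 + x * 1; ring
  | succ m => exact pfib_succ_succ x m

lemma cycle_adj_val {n : ℕ} (u w : Fin (n+2)) :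
    (SimpleGraph.cycleGraph (n+2)).Adj u w ↔
      u.val = (1 + w.val) % (n+2) ∨ w.val = (1 + u.val) % (n+2) := by
  rw [SimpleGraph.cycleGraph_adj, sub_eq_iff_eq_add, sub_eq_iff_eq_add]
  rw [Fin.ext_iff, Fin.ext_iff]
  simp [Fin.val_add]

/-- The interval `{i : a ≤ i ≤ b}` as a finset of `Fin k`. -/
noncomputable def itv (k a b : ℕ) : Finset (Fin k) :=
  Finset.univ.filter (fun i => a ≤ i.val ∧ i.val ≤ b)

lemma mem_itv {k a b : ℕ} (i : Fin k) : i ∈ itv k a b ↔ a ≤ i.val ∧ i.val ≤ b := by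
  simp [itv]

lemma itv_eval (x : ℝ) (n : ℕ) : ∀ b a : ℕ, 1 ≤ a → b ≤ n + 1 →
    (indepPolyOn (SimpleGraph.cycleGraph (n+2)) (itv (n+2) a b)).eval x = pfib x (b+1-a) := by
  intro b
  induction b using Nat.strong_induction_on with
  | _ b IH =>
    intro a ha hb
    by_cases hab : b < a
    · have he : itv (n+2) a b = ∅ := by
        ext i; simp only [mem_itv, Finset.notMem_empty, iff_false]; omega
      have h0 : b + 1 - a = 0 := by omega
      rw [he, indepPolyOn_empty, h0, pfib_zero]
      simp
    · push_neg at hab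
      set v : Fin (n+2) := ⟨b, by omega⟩ with hvdef
      have hv : v ∈ itv (n+2) a b := by rw [mem_itv]; exact ⟨hab, le_refl b⟩
      have hmod : ∀ m : ℕ, m ≤ n + 1 → (1 + m) % (n+2) = if m = n+1 then 0 else m + 1 := by
        intro m hm
        split_ifs with h
        · subst h; rw [show 1 + (n+1) = n+2 by ring, Nat.mod_self]
        · rw [Nat.mod_eq_of_lt (by omega)]; omega
      have hA' : ∀ w, w ∈ itv (n+2) a (b-1) ↔ w ∈ itv (n+2) a b ∧ w ≠ v := by
        intro w
        rw [mem_itv, mem_itv, Ne, Fin.ext_iff]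
        simp only [hvdef]
        omega
      have hB : ∀ w, w ∈ itv (n+2) a (b-2) ↔ w ∈ itv (n+2) a b ∧ w ≠ v
          ∧ ¬ (SimpleGraph.cycleGraph (n+2)).Adj v w := by
        intro w
        rw [mem_itv, mem_itv, Ne, Fin.ext_iff, cycle_adj_val]
        have hw := w.isLt
        rw [hmod w.val (by omega), hmod b hb]
        simp only [hvdef]
        split_ifs <;> omega
      rw [indepPolyOn_split _ _ _ _ v hv hA' hB]
      simp only [Polynomial.eval_add, Polynomial.eval_mul, Polynomial.eval_X]
      rw [IH (b-1) (by omega) a ha (by omega), IH (b-2) (by omega) a ha (by omega)]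
      rcases eq_or_lt_of_le hab with heq | hlt
      · have e1 : b - 1 + 1 - a = 0 := by omega
        have e2 : b - 2 + 1 - a = 0 := by omega
        have e3 : b + 1 - a = 1 := by omega
        rw [e1, e2, e3, pfib_zero, pfib_one]; ring
      · obtain ⟨t, ht⟩ : ∃ t, b + 1 - a = t + 2 := ⟨b - 1 - a, by omega⟩
        have e1 : b - 1 + 1 - a = t + 1 := by omega
        have e2 : b - 2 + 1 - a = t := by omega
        rw [e1, e2, ht, pfib_succ_succ]

lemma cycle_eval (x : ℝ) (n : ℕ) :
    (indepPoly (SimpleGraph.cycleGraph (n+2))).eval x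
      = pfib x (n+1) + x * pfib x (n-1) := by
  have h0 : ((0 : Fin (n+2)) : ℕ) = 0 := rfl
  have hadj : ∀ w : Fin (n+2),
      (SimpleGraph.cycleGraph (n+2)).Adj 0 w ↔ (w.val = 1 ∨ w.val = n+1) := by
    intro w
    rw [cycle_adj_val]
    have hw := w.isLt
    rw [h0, show (1 + 0) % (n+2) = 1 from Nat.mod_eq_of_lt (by omega)]
    constructor
    · rintro (h | h)
      · rcases eq_or_ne w.val (n+1) with he | he
        · right; exact he
        · rw [Nat.mod_eq_of_lt (by omega)] at h; omega
      · left; exact h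
    · rintro (h | h)
      · right; exact h
      · left; rw [h, show 1 + (n+1) = n+2 from by ring, Nat.mod_self]
  have hA' : ∀ w : Fin (n+2), w ∈ itv (n+2) 1 (n+1) ↔ w ∈ Finset.univ ∧ w ≠ 0 := by
    intro w
    rw [mem_itv, Ne, Fin.ext_iff, h0]
    have hw := w.isLt
    simp only [Finset.mem_univ, true_and]
    omega
  have hB : ∀ w : Fin (n+2), w ∈ itv (n+2) 2 n ↔ w ∈ Finset.univ ∧ w ≠ 0
      ∧ ¬ (SimpleGraph.cycleGraph (n+2)).Adj 0 w := by
    intro w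
    rw [mem_itv, Ne, Fin.ext_iff, hadj w, h0]
    have hw := w.isLt
    simp only [Finset.mem_univ, true_and]
    omega
  rw [indepPoly, indepPolyOn_split _ _ _ _ 0 (Finset.mem_univ 0) hA' hB]
  simp only [Polynomial.eval_add, Polynomial.eval_mul, Polynomial.eval_X]
  rw [itv_eval x n (n+1) 1 (by omega) (by omega), itv_eval x n n 2 (by omega) (by omega)]
  have e1 : n + 1 + 1 - 1 = n + 1 := by omega
  have e2 : n + 1 - 2 = n - 1 := by omega
  rw [e1, e2]

noncomputable def Eaux (x : ℝ) (k : ℕ) : ℝ :=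
  ∑ j ∈ Finset.range (k+1), (k.choose (2*j) : ℝ) * (1+4*x)^j

noncomputable def Oaux (x : ℝ) (k : ℕ) : ℝ :=
  ∑ j ∈ Finset.range (k+1), (k.choose (2*j+1) : ℝ) * (1+4*x)^j

lemma Oaux_succ (x : ℝ) (k : ℕ) : Oaux x (k+1) = Eaux x k + Oaux x k := by
  unfold Oaux Eaux
  have hps : ∀ j, (((k+1).choose (2*j+1) : ℕ) : ℝ)
      = (k.choose (2*j) : ℝ) + (k.choose (2*j+1) : ℝ) := by
    intro j
    rw [Nat.choose_succ_succ]
    push_cast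
    ring
  rw [Finset.sum_range_succ]
  simp only [hps, add_mul]
  rw [Finset.sum_add_distrib, Finset.sum_range_succ (fun j => (k.choose (2*j+1) : ℝ) * (1+4*x)^j)]
  rw [Nat.choose_eq_zero_of_lt (by omega), Nat.choose_eq_zero_of_lt (by omega),
    Nat.choose_eq_zero_of_lt (by omega)]
  push_cast
  ring

lemma Eaux_succ (x : ℝ) (k : ℕ) : Eaux x (k+1) = Eaux x k + (1+4*x) * Oaux x k := by
  unfold Oaux Eaux
  rw [Finset.sum_range_succ' (fun j => (((k+1).choose (2*j) : ℕ) : ℝ) * (1+4*x)^j)]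
  have hps : ∀ j, (((k+1).choose (2*(j+1)) : ℕ) : ℝ)
      = (k.choose (2*j+1) : ℝ) + (k.choose (2*j+2) : ℝ) := by
    intro j
    rw [show 2*(j+1) = (2*j+1) + 1 from by ring, Nat.choose_succ_succ]
    push_cast
    ring
  simp only [hps, add_mul]
  rw [Finset.sum_add_distrib]
  have hE : (∑ j ∈ Finset.range (k+1), (k.choose (2*j+2) : ℝ) * (1+4*x)^(j+1))
      + (((k+1).choose (2*0) : ℕ) : ℝ) * (1+4*x)^0
      = ∑ j ∈ Finset.range (k+1), (k.choose (2*j) : ℝ) * (1+4*x)^j := by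
    rw [Finset.sum_range_succ (fun j => (k.choose (2*j+2) : ℝ) * (1+4*x)^(j+1)),
      Finset.sum_range_succ' (fun j => (k.choose (2*j) : ℝ) * (1+4*x)^j) k]
    rw [Nat.choose_eq_zero_of_lt (show k < 2*k+2 from by omega)]
    simp only [show ∀ j : ℕ, 2*(j+1) = 2*j+2 from fun j => by ring, Nat.mul_zero,
      Nat.choose_zero_right, pow_zero, Nat.cast_zero, Nat.cast_one]
    ring
  have hO : (∑ j ∈ Finset.range (k+1), (k.choose (2*j+1) : ℝ) * (1+4*x)^(j+1))
      = (1+4*x) * ∑ j ∈ Finset.range (k+1), (k.choose (2*j+1) : ℝ) * (1+4*x)^j := by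
    rw [Finset.mul_sum]
    apply Finset.sum_congr rfl
    intro j _
    rw [pow_succ]
    ring
  linear_combination hE + hO

lemma Eaux_rec (x : ℝ) (k : ℕ) :
    Eaux x (k+2) = 2 * Eaux x (k+1) + 4*x*Eaux x k := by
  rw [show k+2 = (k+1)+1 from rfl, Eaux_succ, Oaux_succ, Eaux_succ]
  ring

lemma E_closed (x : ℝ) : ∀ n : ℕ,
    Eaux x (n+2) = 2^(n+1) * (pfib x (n+1) + x * pfib x (n-1))
    ∧ Eaux x (n+3) = 2^(n+2) * (pfib x (n+2) + x * pfib x n) := by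
  intro n
  induction n with
  | zero =>
    constructor
    · show Eaux x 2 = _
      unfold Eaux
      rw [Finset.sum_range_succ, Finset.sum_range_succ, Finset.sum_range_succ]
      norm_num [pfib_zero, pfib_one, Nat.choose]
      ring
    · show Eaux x 3 = _
      unfold Eaux
      rw [Finset.sum_range_succ, Finset.sum_range_succ, Finset.sum_range_succ,
        Finset.sum_range_succ]
      norm_num [pfib_zero, pfib_one, pfib_succ_succ, Nat.choose]
      ring
  | succ m ih =>
    obtain ⟨h1, h2⟩ := ih
    refine ⟨h2, ?_⟩
    rw [show m+1+3 = (m+2)+2 from rfl, Eaux_rec, show m+2+1 = m+3 from rfl, h2, h1]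
    have e3 : pfib x (m+1+2) = pfib x (m+2) + x * pfib x (m+1) := pfib_succ_succ x (m+1)
    rw [e3, pfib_succ x m]
    ring

lemma sum_eq_Eaux (x : ℝ) (k : ℕ) :
    ∑ j ∈ Finset.range (k / 2 + 1), (k.choose (2 * j) : ℝ) * (1 + 4 * x) ^ j = Eaux x k := by
  unfold Eaux
  apply Finset.sum_subset
  · apply Finset.range_subset_range.2; omega
  · intro j _ hj
    rw [Finset.mem_range, not_lt] at hj
    rw [Nat.choose_eq_zero_of_lt (by omega)]
    simp


/-- For every `k ≥ 2`,
`P_{C_k}(x) = 2^{1-k} Σ_{j=0}^{⌊k/2⌋} C(k,2j) (1+4x)^j`. -/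
theorem stmt9 (k : ℕ) (hk : 2 ≤ k) (x : ℝ) :
    (indepPoly (SimpleGraph.cycleGraph k)).eval x
      = (2 : ℝ) ^ ((1 : ℤ) - (k : ℤ)) *
          ∑ j ∈ Finset.range (k / 2 + 1), (k.choose (2 * j) : ℝ) * (1 + 4 * x) ^ j := by
  obtain ⟨n, rfl⟩ : ∃ n, k = n + 2 := ⟨k - 2, by omega⟩
  rw [sum_eq_Eaux, (E_closed x n).1, cycle_eval]
  have hz : ((1 : ℤ) - ((n + 2 : ℕ) : ℤ)) = -((n+1 : ℕ) : ℤ) := by push_cast; ring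
  rw [hz, zpow_neg, zpow_natCast]
  have h2 : (2 : ℝ) ^ (n+1) ≠ 0 := by positivity
  field_simp
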